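/- arXiv:1303.3184 — 2 statements merged into one kernel-verified Lean document; each statement's English description precedes it below -/
import Mathlib

section
/- Let f : U → ℝ be C^k on an open set U ⊆ ℝ^d containing X₀, with all derivatives of f at X₀ of orders 1 through k−1 vanishing, and suppose the k-th order Taylor homogeneous polynomial P_k of f at X₀ is strictly positive on the unit sphere. Then f has a strict local minimum at X₀. -/
open Set Metric

set_option maxHeartbeats 1000000 in
theorem stmt_6 (d k : ℕ) (hk : 2 ≤ k) (U : Set (EuclideanSpace ℝ (Fin d)))
    (hU : IsOpen U) (X₀ : EuclideanSpace ℝ (Fin d)) (hX₀ : X₀ ∈ U)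
    (f : EuclideanSpace ℝ (Fin d) → ℝ) (hf : ContDiffOn ℝ k f U)
    (hders : ∀ j : ℕ, 1 ≤ j → j < k → iteratedFDerivWithin ℝ j f U X₀ = 0)
    (hpos : ∀ V : EuclideanSpace ℝ (Fin d), ‖V‖ = 1 →
      0 < (1 / (k.factorial : ℝ)) * iteratedFDerivWithin ℝ k f U X₀ (fun _ => V)) :
    ∃ ε > 0, ∀ X : EuclideanSpace ℝ (Fin d), ‖X - X₀‖ < ε → X ≠ X₀ → f X₀ < f X := by
  rcases subsingleton_or_nontrivial (EuclideanSpace ℝ (Fin d)) with hs | hs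
  · exact ⟨1, one_pos, fun X _ hne => absurd (Subsingleton.elim X X₀) hne⟩
  set T := iteratedFDerivWithin ℝ k f U X₀ with hT
  set G := iteratedFDerivWithin ℝ k f U with hG
  -- minimum of T on the unit sphere
  have hQc : Continuous fun V : EuclideanSpace ℝ (Fin d) => T (fun _ : Fin k => V) :=
    T.cont.comp (continuous_pi fun _ => continuous_id)
  obtain ⟨V₁, hV₁⟩ := exists_norm_eq (EuclideanSpace ℝ (Fin d)) (zero_le_one)
  have hne : (sphere (0 : EuclideanSpace ℝ (Fin d)) 1).Nonempty :=
    ⟨V₁, by simpa [mem_sphere_iff_norm] using hV₁⟩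
  obtain ⟨V₀, hV₀mem, hmin⟩ :=
    (isCompact_sphere (0 : EuclideanSpace ℝ (Fin d)) 1).exists_isMinOn hne hQc.continuousOn
  have hV₀norm : ‖V₀‖ = 1 := by simpa [mem_sphere_iff_norm] using hV₀mem
  set m := T (fun _ : Fin k => V₀) with hm
  have hmpos : 0 < m := by
    have h := hpos V₀ hV₀norm
    have hfac : (0:ℝ) < 1 / k.factorial := by positivity
    nlinarith
  -- lower bound m * ‖w‖^k ≤ T w^k
  have hlow : ∀ w : EuclideanSpace ℝ (Fin d), m * ‖w‖ ^ k ≤ T (fun _ : Fin k => w) := by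
    intro w
    rcases eq_or_ne w 0 with rfl | hw
    · have : T (fun _ : Fin k => (0 : EuclideanSpace ℝ (Fin d))) = 0 :=
        T.map_coord_zero (⟨0, by omega⟩ : Fin k) rfl
      simp [this, zero_pow (by omega : k ≠ 0)]
    · have hnw : 0 < ‖w‖ := norm_pos_iff.mpr hw
      set V := ‖w‖⁻¹ • w with hV
      have hVnorm : ‖V‖ = 1 := by
        rw [hV, norm_smul, norm_inv, norm_norm, inv_mul_cancel₀ hnw.ne']
      have hwV : w = ‖w‖ • V := by rw [hV, smul_inv_smul₀ hnw.ne']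
      have hsm : T (fun _ : Fin k => ‖w‖ • V) = (‖w‖ ^ k) * T (fun _ : Fin k => V) := by
        have := T.map_smul_univ (fun _ : Fin k => ‖w‖) (fun _ : Fin k => V)
        simpa [Finset.prod_const, smul_eq_mul] using this
      have hminV : m ≤ T (fun _ : Fin k => V) := hmin (by simpa [mem_sphere_iff_norm] using hVnorm)
      calc m * ‖w‖ ^ k ≤ T (fun _ : Fin k => V) * ‖w‖ ^ k := by
            have : (0:ℝ) ≤ ‖w‖ ^ k := by positivity
            nlinarith
        _ = T (fun _ : Fin k => w) := by
            have hTw : T (fun _ : Fin k => w) = ‖w‖ ^ k * T (fun _ : Fin k => V) := by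
              conv_lhs => rw [hwV]
              exact hsm
            rw [hTw]; ring
  -- choose ε
  have hGcont : ContinuousOn G U :=
    hf.continuousOn_iteratedFDerivWithin le_rfl hU.uniqueDiffOn
  have hev : ∀ᶠ x in nhds X₀, x ∈ U ∧ ‖G x - T‖ < m / 2 := by
    have hU' : U ∈ nhds X₀ := hU.mem_nhds hX₀
    have h2 : ContinuousAt G X₀ := hGcont.continuousAt hU'
    have h4 : ∀ᶠ y in nhds (G X₀), ‖y - T‖ < m / 2 := by
      have hball : Metric.ball T (m / 2) ∈ nhds (G X₀) := by
        rw [show G X₀ = T from rfl]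
        exact Metric.ball_mem_nhds _ (by positivity)
      filter_upwards [hball] with y hy
      simpa [Metric.mem_ball, dist_eq_norm] using hy
    exact (Filter.eventually_of_mem hU' fun x hx => hx).and (h2.tendsto.eventually h4)
  obtain ⟨ε, hε, hball⟩ := Metric.eventually_nhds_iff_ball.mp hev
  refine ⟨ε, hε, fun X hXε hXne => ?_⟩
  set v := X - X₀ with hv
  have hvne : v ≠ 0 := sub_ne_zero.mpr hXne
  have hvnorm : ‖v‖ < ε := hXε
  have hvpos : 0 < ‖v‖ := norm_pos_iff.mpr hvne
  set ψ : ℕ → ℝ → ℝ := fun j s => iteratedFDerivWithin ℝ j f U (X₀ + s • v) (fun _ : Fin j => v)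
    with hψ
  have hmemball : ∀ t ∈ Icc (0:ℝ) 1, X₀ + t • v ∈ Metric.ball X₀ ε := by
    intro t ht
    rw [Metric.mem_ball, dist_eq_norm, add_sub_cancel_left, norm_smul, Real.norm_eq_abs,
      abs_of_nonneg ht.1]
    calc t * ‖v‖ ≤ 1 * ‖v‖ := by nlinarith [ht.2, hvpos]
      _ < ε := by simpa using hvnorm
  -- derivative lemma
  have hd : ∀ j, j < k → ∀ t, t ∈ Icc (0:ℝ) 1 → HasDerivAt (ψ j) (ψ (j+1) t) t := by
    intro j hj t ht
    have hxU : X₀ + t • v ∈ U := (hball _ (hmemball t ht)).1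
    have hdiff : DifferentiableAt ℝ (iteratedFDerivWithin ℝ j f U) (X₀ + t • v) :=
      ((hf.differentiableOn_iteratedFDerivWithin (by exact_mod_cast hj) hU.uniqueDiffOn)
        _ hxU).differentiableAt (hU.mem_nhds hxU)
    have hL : HasDerivAt (fun s : ℝ => X₀ + s • v) v t := by
      simpa using ((hasDerivAt_id t).smul_const v).const_add X₀
    have h1 : HasFDerivAt (fun y => iteratedFDerivWithin ℝ j f U y (fun _ : Fin j => v))
        ((fderiv ℝ (iteratedFDerivWithin ℝ j f U) (X₀ + t • v)).flipMultilinear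
          (fun _ : Fin j => v)) (X₀ + t • v) :=
      hdiff.hasFDerivAt.continuousMultilinear_apply_const _
    have h2 := h1.comp_hasDerivAt t hL
    refine HasDerivAt.congr_deriv h2 ?_
    symm
    have h3 : ((fderiv ℝ (iteratedFDerivWithin ℝ j f U) (X₀ + t • v)).flipMultilinear
        (fun _ : Fin j => v)) v
        = (fderiv ℝ (iteratedFDerivWithin ℝ j f U) (X₀ + t • v) v) (fun _ : Fin j => v) := rfl
    rw [h3, ← fderivWithin_of_isOpen hU hxU, hψ]
    show iteratedFDerivWithin ℝ (j+1) f U (X₀ + t • v) (fun _ : Fin (j+1) => v) = _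
    rw [iteratedFDerivWithin_succ_apply_left]
    rfl
  -- positivity of ψ k on Icc
  have hψk : ∀ t ∈ Icc (0:ℝ) 1, 0 < ψ k t := by
    intro t ht
    obtain ⟨hxU, hxB⟩ := hball _ (hmemball t ht)
    have e1 : ψ k t = T (fun _ : Fin k => v) + (G (X₀ + t • v) - T) (fun _ : Fin k => v) := by
      rw [hψ]
      simp [ContinuousMultilinearMap.sub_apply]
      rfl
    have e2 : |(G (X₀ + t • v) - T) (fun _ : Fin k => v)| ≤ ‖G (X₀ + t • v) - T‖ * ‖v‖ ^ k := by
      have h := (G (X₀ + t • v) - T).le_opNorm (fun _ : Fin k => v)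
      simpa [Finset.prod_const, Real.norm_eq_abs] using h
    have e3 : m * ‖v‖ ^ k ≤ T (fun _ : Fin k => v) := hlow v
    have e4 : ‖G (X₀ + t • v) - T‖ * ‖v‖ ^ k ≤ (m / 2) * ‖v‖ ^ k := by
      have hp : (0:ℝ) ≤ ‖v‖ ^ k := by positivity
      nlinarith [hxB]
    have e5 := (abs_le.mp e2).1
    have e6 : (0:ℝ) < (m / 2) * ‖v‖ ^ k := by positivity
    rw [e1]
    nlinarith
  -- vanishing of lower derivatives at 0
  have hzero : ∀ j, 1 ≤ j → j < k → ψ j 0 = 0 := by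
    intro j h1 h2
    rw [hψ]
    simp only [zero_smul, add_zero, hders j h1 h2, ContinuousMultilinearMap.zero_apply]
  -- strict monotonicity engine
  have hmono : ∀ j, j < k → (∀ t ∈ Ioc (0:ℝ) 1, 0 < ψ (j+1) t) →
      StrictMonoOn (ψ j) (Icc 0 1) := by
    intro j hj hp
    apply strictMonoOn_of_deriv_pos (convex_Icc 0 1)
    · intro t ht
      exact (hd j hj t ht).continuousAt.continuousWithinAt
    · intro t ht
      rw [interior_Icc] at ht
      rw [(hd j hj t ⟨ht.1.le, ht.2.le⟩).deriv]
      exact hp t ⟨ht.1, ht.2.le⟩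
  -- downward induction
  have claim : ∀ i, i < k → ∀ t ∈ Ioc (0:ℝ) 1, 0 < ψ (k - i) t := by
    intro i
    induction i with
    | zero => intro _ t ht; simpa using hψk t ⟨ht.1.le, ht.2⟩
    | succ i ih =>
      intro hik t ht
      have hj1 : 1 ≤ k - (i + 1) := by omega
      have hjk : k - (i + 1) < k := by omega
      have hsucc : k - (i + 1) + 1 = k - i := by omega
      have hp : ∀ s ∈ Ioc (0:ℝ) 1, 0 < ψ (k - (i + 1) + 1) s := by
        rw [hsucc]; exact ih (by omega)
      have hmono' := hmono _ hjk hp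
      have h0 : ψ (k - (i + 1)) 0 = 0 := hzero _ hj1 hjk
      have := hmono' (left_mem_Icc.mpr zero_le_one) ⟨ht.1.le, ht.2⟩ ht.1
      rwa [h0] at this
  have h1pos : ∀ t ∈ Ioc (0:ℝ) 1, 0 < ψ 1 t := by
    have h := claim (k - 1) (by omega)
    rwa [show k - (k - 1) = 1 by omega] at h
  have hmono0 := hmono 0 (by omega) h1pos
  have hfin : ψ 0 0 < ψ 0 1 :=
    hmono0 (left_mem_Icc.mpr zero_le_one) (right_mem_Icc.mpr zero_le_one) one_pos
  have e0 : ψ 0 0 = f X₀ := by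
    rw [hψ]; simp [iteratedFDerivWithin_zero_apply]
  have e1 : ψ 0 1 = f X := by
    rw [hψ]; simp [iteratedFDerivWithin_zero_apply, hv]
  rwa [e0, e1] at hfin
end

section
/- Let f : U → ℝ be C^{k+1} on an open set U ⊆ ℝ^d containing X₀ with all derivatives of orders 1 through k−1 vanishing at X₀, where k is odd and the k-th Taylor homogeneous polynomial P_k of f at X₀ is not identically zero. Then X₀ is a saddle point of f. -/
open Set Filter
open scoped Topology

theorem hasFTaylor_comp_const_add
    {E F : Type*} [NormedAddCommGroup E] [NormedSpace ℝ E]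
    [NormedAddCommGroup F] [NormedSpace ℝ F]
    {f : E → F} {p : E → FormalMultilinearSeries ℝ E F} {s : Set E} {n : WithTop ℕ∞}
    (hf : HasFTaylorSeriesUpToOn n f p s) (c : E) :
    HasFTaylorSeriesUpToOn n (fun y => f (c + y)) (fun y m => p (c + y) m)
      ((fun y => c + y) ⁻¹' s) := by
  constructor
  · intro x hx
    exact hf.zero_eq _ hx
  · intro m hm x hx
    have h1 : HasFDerivWithinAt (fun y : E => c + y) (ContinuousLinearMap.id ℝ E)
        ((fun y => c + y) ⁻¹' s) x := (hasFDerivWithinAt_id x _).const_add c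
    have h2 := (hf.fderivWithin m hm (c + x) hx).comp x h1 (mapsTo_preimage _ _)
    exact h2
  · intro m hm
    exact (hf.cont m hm).comp ((continuous_const.add continuous_id).continuousOn)
      (mapsTo_preimage _ _)

theorem aux_pos (d k : ℕ) (hk1 : 1 ≤ k)
    (U : Set (EuclideanSpace ℝ (Fin d))) (hU : IsOpen U)
    (X₀ : EuclideanSpace ℝ (Fin d)) (hX₀ : X₀ ∈ U)
    (f : EuclideanSpace ℝ (Fin d) → ℝ) (hf : ContDiffOn ℝ (k + 1) f U)
    (hders : ∀ j : ℕ, 1 ≤ j → j < k → iteratedFDerivWithin ℝ j f U X₀ = 0)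
    (W : EuclideanSpace ℝ (Fin d))
    (hpos : 0 < iteratedFDerivWithin ℝ k f U X₀ (fun _ => W))
    {ε : ℝ} (hε : 0 < ε) :
    ∃ Z, ‖Z - X₀‖ < ε ∧ f X₀ < f Z := by
  classical
  set lV : ℝ →L[ℝ] EuclideanSpace ℝ (Fin d) := (ContinuousLinearMap.id ℝ ℝ).smulRight W with hlV
  have hlVapp : ∀ t : ℝ, lV t = t • W := fun t => rfl
  set s₁ : Set (EuclideanSpace ℝ (Fin d)) := (fun y => X₀ + y) ⁻¹' U with hs₁def
  have hs₁ : IsOpen s₁ := hU.preimage (by fun_prop)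
  set I : Set ℝ := lV ⁻¹' s₁ with hIdef
  have hI : IsOpen I := hs₁.preimage lV.continuous
  have hImem : ∀ t : ℝ, t ∈ I ↔ X₀ + t • W ∈ U := fun t => Iff.rfl
  have hI0 : (0:ℝ) ∈ I := by
    rw [hImem]; simpa using hX₀
  set f₁ : EuclideanSpace ℝ (Fin d) → ℝ := fun y => f (X₀ + y) with hf₁def
  have hf₁ : ContDiffOn ℝ (k+1) f₁ s₁ :=
    hf.comp ((contDiff_const.add contDiff_id).contDiffOn) (mapsTo_preimage _ _)
  set g : ℝ → ℝ := fun t => f (X₀ + t • W) with hgdef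
  have hgc : g = f₁ ∘ lV := rfl
  have hg : ContDiffOn ℝ (k+1) g I := hf₁.comp_continuousLinearMap lV
  -- translation: iterated derivatives of f₁
  have Hf : HasFTaylorSeriesUpToOn (k+1) f (ftaylorSeriesWithin ℝ f U) U :=
    hf.ftaylorSeriesWithin hU.uniqueDiffOn
  have htrans : ∀ i : ℕ, (i : WithTop ℕ∞) ≤ (k+1 : ℕ) → ∀ y ∈ s₁,
      iteratedFDerivWithin ℝ i f₁ s₁ y = iteratedFDerivWithin ℝ i f U (X₀ + y) := by
    intro i hi y hy
    exact ((hasFTaylor_comp_const_add Hf X₀).eq_iteratedFDerivWithin_of_uniqueDiffOn hi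
      hs₁.uniqueDiffOn hy).symm
  -- key: iterated derivs of g along the line
  have key : ∀ i : ℕ, (i : WithTop ℕ∞) ≤ (k+1 : ℕ) → ∀ t ∈ I,
      iteratedDerivWithin i g I t
        = iteratedFDerivWithin ℝ i f U (X₀ + t • W) (fun _ => W) := by
    intro i hi t ht
    rw [iteratedDerivWithin_eq_iteratedFDerivWithin, hgc]
    rw [lV.iteratedFDerivWithin_comp_right hf₁ hs₁.uniqueDiffOn hI.uniqueDiffOn ht hi]
    rw [ContinuousMultilinearMap.compContinuousLinearMap_apply]
    rw [htrans i hi _ ht]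
    congr 1
    funext _
    simp [hlVapp]
  -- continuity of the k-th directional derivative
  have hkle : (k : WithTop ℕ∞) ≤ ((k+1 : ℕ) : WithTop ℕ∞) := by exact_mod_cast Nat.le_succ k
  have hDcont : ContinuousOn (fun x => iteratedFDerivWithin ℝ k f U x (fun _ => W)) U := by
    have h1 := hf.continuousOn_iteratedFDerivWithin (by exact_mod_cast hkle) hU.uniqueDiffOn
    exact (ContinuousMultilinearMap.apply ℝ (fun _ : Fin k => EuclideanSpace ℝ (Fin d)) ℝ
      (fun _ => W)).continuous.comp_continuousOn h1
  have h0W : X₀ + (0:ℝ) • W = X₀ := by simp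
  have hLcont : Continuous (fun t : ℝ => X₀ + t • W) := by fun_prop
  have hDL : ContinuousAt
      (fun t : ℝ => iteratedFDerivWithin ℝ k f U (X₀ + t • W) (fun _ => W)) 0 := by
    have hA : ContinuousAt (fun x => iteratedFDerivWithin ℝ k f U x (fun _ => W)) X₀ :=
      hDcont.continuousAt (hU.mem_nhds hX₀)
    rw [← h0W] at hA
    exact ContinuousAt.comp (g := fun x => iteratedFDerivWithin ℝ k f U x (fun _ => W)) hA hLcont.continuousAt
  have hev1 : ∀ᶠ s in 𝓝 (0:ℝ),
      0 < iteratedFDerivWithin ℝ k f U (X₀ + s • W) (fun _ => W) := by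
    have hpos' : (0:ℝ) < iteratedFDerivWithin ℝ k f U (X₀ + (0:ℝ) • W) (fun _ => W) := by
      rw [h0W]; exact hpos
    exact hDL.eventually (eventually_gt_nhds hpos')
  have hev2 : ∀ᶠ s in 𝓝 (0:ℝ), ‖s • W‖ < ε := by
    have hc : ContinuousAt (fun s : ℝ => ‖s • W‖) 0 := by fun_prop
    have h00 : Filter.Tendsto (fun s : ℝ => ‖s • W‖) (𝓝 0) (𝓝 0) := by
      simpa using hc.tendsto
    exact h00.eventually (eventually_lt_nhds hε)
  have hS : {s : ℝ | (s ∈ I ∧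
      0 < iteratedFDerivWithin ℝ k f U (X₀ + s • W) (fun _ => W)) ∧ ‖s • W‖ < ε} ∈ 𝓝 (0:ℝ) :=
    Filter.inter_mem (Filter.inter_mem (hI.mem_nhds hI0) hev1) hev2
  obtain ⟨δ, hδ, hball⟩ := Metric.mem_nhds_iff.mp hS
  set t : ℝ := δ/2 with htdef
  have ht0 : 0 < t := by positivity
  have htball : Icc (0:ℝ) t ⊆ Metric.ball (0:ℝ) δ := by
    intro x hx
    rw [Metric.mem_ball, Real.dist_eq, sub_zero, abs_of_nonneg hx.1]
    calc x ≤ t := hx.2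
    _ < δ := by rw [htdef]; linarith
  have hprop : ∀ x ∈ Icc (0:ℝ) t, x ∈ I ∧
      0 < iteratedFDerivWithin ℝ k f U (X₀ + x • W) (fun _ => W) ∧ ‖x • W‖ < ε := by
    intro x hx
    have := hball (htball hx)
    exact ⟨this.1.1, this.1.2, this.2⟩
  have hIccI : Icc (0:ℝ) t ⊆ I := fun x hx => (hprop x hx).1
  have hud : UniqueDiffOn ℝ (Icc (0:ℝ) t) := uniqueDiffOn_Icc ht0
  have heqset : ∀ i : ℕ, (i : WithTop ℕ∞) ≤ ((k+1:ℕ) : WithTop ℕ∞) → ∀ x ∈ Icc (0:ℝ) t,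
      iteratedDerivWithin i g (Icc 0 t) x = iteratedDerivWithin i g I x := by
    intro i hi x hx
    rw [iteratedDerivWithin_eq_iteratedFDerivWithin, iteratedDerivWithin_eq_iteratedFDerivWithin]
    rw [← ((hg.ftaylorSeriesWithin hI.uniqueDiffOn).mono
      hIccI).eq_iteratedFDerivWithin_of_uniqueDiffOn (by exact_mod_cast hi) hud hx]
    rfl
  have hn : k - 1 + 1 = k := Nat.succ_pred_eq_of_pos hk1
  have hgIcc : ContDiffOn ℝ (k+1) g (Icc (0:ℝ) t) := hg.mono hIccI
  have hcd : ContDiffOn ℝ (k-1 : ℕ) g (Icc (0:ℝ) t) := by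
    apply hgIcc.of_le
    exact_mod_cast (by omega : k - 1 ≤ k + 1)
  have hdiff : DifferentiableOn ℝ (iteratedDerivWithin (k-1) g (Icc (0:ℝ) t)) (Ioo 0 t) := by
    refine (hgIcc.differentiableOn_iteratedDerivWithin ?_ hud).mono Ioo_subset_Icc_self
    exact_mod_cast (by omega : k - 1 < k + 1)
  obtain ⟨ξ, hξ, hTay⟩ := taylor_mean_remainder_lagrange (n := k-1) ht0.ne
    (by rw [Set.uIcc_of_le ht0.le]; exact hcd)
    (by rw [Set.uIcc_of_le ht0.le, Set.uIoo_of_le ht0.le]; exact hdiff)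
  rw [Set.uIcc_of_le ht0.le] at hTay
  rw [Set.uIoo_of_le ht0.le] at hξ
  have hξIcc : ξ ∈ Icc (0:ℝ) t := Ioo_subset_Icc_self hξ
  have hpoly : taylorWithinEval g (k-1) (Icc (0:ℝ) t) 0 t = g 0 := by
    rw [taylor_within_apply]
    rw [Finset.sum_eq_single 0]
    · simp
    · intro i hi hne0
      have h1i : 1 ≤ i := Nat.one_le_iff_ne_zero.mpr hne0
      have hik : i < k := by have := Finset.mem_range.mp hi; omega
      have hzero : iteratedDerivWithin i g (Icc (0:ℝ) t) 0 = 0 := by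
        rw [heqset i (by exact_mod_cast (by omega : i ≤ k + 1)) 0 ⟨le_rfl, ht0.le⟩,
          key i (by exact_mod_cast (by omega : i ≤ k + 1)) 0 hI0, h0W, hders i h1i hik]
        simp
      simp [hzero]
    · intro h
      exact absurd (Finset.mem_range.mpr (by omega)) h
  have hξI : ξ ∈ I := hIccI hξIcc
  have hkd : iteratedDerivWithin (k-1+1) g (Icc (0:ℝ) t) ξ
      = iteratedFDerivWithin ℝ k f U (X₀ + ξ • W) (fun _ => W) := by
    rw [hn, heqset k (by exact_mod_cast Nat.le_succ k) ξ hξIcc,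
      key k hkle ξ hξI]
  rw [hpoly, hkd, hn] at hTay
  have hDpos := (hprop ξ hξIcc).2.1
  have hrem : 0 < iteratedFDerivWithin ℝ k f U (X₀ + ξ • W) (fun _ => W) * (t - 0)^k
      / (k.factorial : ℝ) := by
    have hpow : (0:ℝ) < (t - 0)^k := by
      rw [sub_zero]; positivity
    have hfac : (0:ℝ) < (k.factorial : ℝ) := by positivity
    exact div_pos (mul_pos hDpos hpow) hfac
  refine ⟨X₀ + t • W, ?_, ?_⟩
  · rw [show X₀ + t • W - X₀ = t • W by abel]
    exact (hprop t ⟨ht0.le, le_rfl⟩).2.2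
  · have hg0 : g 0 = f X₀ := by rw [hgdef]; simp
    have hgt : g t = f (X₀ + t • W) := rfl
    rw [← hg0, ← hgt]
    linarith [hTay, hrem]

theorem stmt_8 (d k : ℕ) (hk1 : 1 ≤ k) (hkodd : Odd k)
    (U : Set (EuclideanSpace ℝ (Fin d))) (hU : IsOpen U)
    (X₀ : EuclideanSpace ℝ (Fin d)) (hX₀ : X₀ ∈ U)
    (f : EuclideanSpace ℝ (Fin d) → ℝ) (hf : ContDiffOn ℝ (k + 1) f U)
    (hders : ∀ j : ℕ, 1 ≤ j → j < k → iteratedFDerivWithin ℝ j f U X₀ = 0)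
    (hne : ∃ V : EuclideanSpace ℝ (Fin d),
      (1 / (k.factorial : ℝ)) * iteratedFDerivWithin ℝ k f U X₀ (fun _ => V) ≠ 0) :
    ∀ ε > 0, ∃ Y Z : EuclideanSpace ℝ (Fin d),
      ‖Y - X₀‖ < ε ∧ ‖Z - X₀‖ < ε ∧ f Y < f X₀ ∧ f X₀ < f Z := by
  obtain ⟨V, hV⟩ := hne
  intro ε hε
  have hc : iteratedFDerivWithin ℝ k f U X₀ (fun _ => V) ≠ 0 := by
    intro h; rw [h] at hV; simp at hV
  -- the value on -V
  have hnegV : iteratedFDerivWithin ℝ k f U X₀ (fun _ => -V)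
      = -(iteratedFDerivWithin ℝ k f U X₀ (fun _ => V)) := by
    have h1 : (fun _ : Fin k => -V) = fun _ : Fin k => (-1 : ℝ) • V := by
      funext _; simp
    rw [h1, (iteratedFDerivWithin ℝ k f U X₀).map_smul_univ (fun _ : Fin k => (-1:ℝ))
      (fun _ : Fin k => V)]
    simp [hkodd.neg_one_pow]
  -- negated function
  have hfneg : ContDiffOn ℝ (k + 1) (fun x => -(f x)) U := hf.neg
  have hnegders : ∀ j : ℕ, (j : WithTop ℕ∞) ≤ ((k+1 : ℕ) : WithTop ℕ∞) →
      iteratedFDerivWithin ℝ j (fun x => -(f x)) U X₀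
        = -(iteratedFDerivWithin ℝ j f U X₀) := by
    intro j _
    exact iteratedFDerivWithin_neg_apply hU.uniqueDiffOn hX₀
  have hdersneg : ∀ j : ℕ, 1 ≤ j → j < k →
      iteratedFDerivWithin ℝ j (fun x => -(f x)) U X₀ = 0 := by
    intro j h1 h2
    rw [hnegders j (by exact_mod_cast (by omega : j ≤ k + 1)), hders j h1 h2, neg_zero]
  have hnegk : ∀ W : EuclideanSpace ℝ (Fin d),
      iteratedFDerivWithin ℝ k (fun x => -(f x)) U X₀ (fun _ => W)
        = -(iteratedFDerivWithin ℝ k f U X₀ (fun _ => W)) := by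
    intro W
    rw [hnegders k (by exact_mod_cast Nat.le_succ k)]
    simp
  rcases lt_or_gt_of_ne hc with hlt | hgt
  · -- c < 0 : use -V for Z, and -f with V for Y
    obtain ⟨Z, hZ1, hZ2⟩ := aux_pos d k hk1 U hU X₀ hX₀ f hf hders (-V)
      (by rw [hnegV]; linarith) hε
    obtain ⟨Y, hY1, hY2⟩ := aux_pos d k hk1 U hU X₀ hX₀ (fun x => -(f x)) hfneg hdersneg V
      (by rw [hnegk]; linarith) hε
    exact ⟨Y, Z, hY1, hZ1, by linarith, hZ2⟩
  · -- c > 0 : use V for Z, and -f with -V for Y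
    obtain ⟨Z, hZ1, hZ2⟩ := aux_pos d k hk1 U hU X₀ hX₀ f hf hders V hgt hε
    obtain ⟨Y, hY1, hY2⟩ := aux_pos d k hk1 U hU X₀ hX₀ (fun x => -(f x)) hfneg hdersneg (-V)
      (by rw [hnegk, hnegV]; linarith) hε
    exact ⟨Y, Z, hY1, hZ1, by linarith, hZ2⟩
end
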